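/- arXiv:2512.17485 — 3 statements merged into one kernel-verified Lean document; each statement's English description precedes it below -/
import Mathlib

section
/- Let 0 < λ < 1, A(s) = ∫_0^s (λ-1)/(e^{λ(x-1)} - x) dx and B(s) = exp(A(s)) for s ∈ [0,1). Then B(0) = 1, B satisfies the differential equation B'(s)·(e^{λ(s-1)} − s) = (λ−1)·B(s) on [0,1), B is strictly decreasing on [0,1), and lim_{s→1⁻} B(s) = 0. -/
open Filter

/-- The Abel function of the subcritical (`0 < λ < 1`) Markov branching process with
Poisson(λ) reproduction. -/
noncomputable def abelA (lam : ℝ) (s : ℝ) : ℝ :=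
  ∫ x in (0:ℝ)..s, (lam - 1) / (Real.exp (lam * (x - 1)) - x)

/-- The Koenigs function `B(s) = exp (A(s))`. -/
noncomputable def koenigsB (lam : ℝ) (s : ℝ) : ℝ := Real.exp (abelA lam s)

/-- For `0 < λ < 1`, the Koenigs function `B` satisfies `B(0) = 1`, the
differential equation `B'(s)(e^{λ(s-1)} - s) = (λ-1)B(s)` on `[0,1)`, `B` is
strictly decreasing on `[0,1)`, and `B(s) → 0` as `s → 1⁻`. -/
theorem koenigsB_properties (lam : ℝ) (h0 : 0 < lam) (h1 : lam < 1) :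
    koenigsB lam 0 = 1 ∧
    (∀ s ∈ Set.Ico (0:ℝ) 1, ∃ B' : ℝ, HasDerivAt (koenigsB lam) B' s ∧
      B' * (Real.exp (lam * (s - 1)) - s) = (lam - 1) * koenigsB lam s) ∧
    StrictAntiOn (koenigsB lam) (Set.Ico 0 1) ∧
    Tendsto (koenigsB lam) (nhdsWithin 1 (Set.Iio 1)) (nhds 0) := by
  set g : ℝ → ℝ := fun x => (lam - 1) / (Real.exp (lam * (x - 1)) - x) with hg
  have hpos : ∀ x : ℝ, x < 1 → 0 < Real.exp (lam * (x - 1)) - x := by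
    intro x hx
    have h := Real.add_one_le_exp (lam * (x - 1))
    nlinarith
  have hcont : ContinuousOn g (Set.Iio 1) := by
    apply ContinuousOn.div continuousOn_const
    · exact ((Real.continuous_exp.comp (by continuity)).sub continuous_id).continuousOn
    · intro x hx; exact (hpos x hx).ne'
  -- A has derivative g s at every s < 1
  have hAderiv : ∀ s : ℝ, s < 1 → HasDerivAt (abelA lam) (g s) s := by
    intro s hs
    have hsub : Set.uIcc 0 s ⊆ Set.Iio 1 := by
      intro x hx
      rcases Set.mem_uIcc.1 hx with h | h
      · exact lt_of_le_of_lt h.2 hs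
      · exact lt_of_le_of_lt h.2 one_pos
    have hint : IntervalIntegrable g MeasureTheory.volume 0 s :=
      (hcont.mono hsub).intervalIntegrable
    have hmeas : StronglyMeasurableAtFilter g (nhds s) :=
      ContinuousOn.stronglyMeasurableAtFilter isOpen_Iio hcont s hs
    have hcs : ContinuousAt g s := hcont.continuousAt (Iio_mem_nhds hs)
    exact intervalIntegral.integral_hasDerivAt_right hint hmeas hcs
  have hBderiv : ∀ s : ℝ, s < 1 →
      HasDerivAt (koenigsB lam) (Real.exp (abelA lam s) * g s) s := by
    intro s hs
    exact (hAderiv s hs).exp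
  have hBpos : ∀ s : ℝ, 0 < koenigsB lam s := fun s => Real.exp_pos _
  refine ⟨?_, ?_, ?_, ?_⟩
  · simp [koenigsB, abelA]
  · intro s hs
    refine ⟨Real.exp (abelA lam s) * g s, hBderiv s hs.2, ?_⟩
    have hne := (hpos s hs.2).ne'
    simp only [hg, koenigsB]
    rw [mul_assoc, div_mul_cancel₀ _ hne, mul_comm]
  · have hconv : Convex ℝ (Set.Ico (0:ℝ) 1) := convex_Ico 0 1
    have hc : ContinuousOn (koenigsB lam) (Set.Ico 0 1) := fun x hx =>
      ((hBderiv x hx.2).continuousAt).continuousWithinAt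
    refine strictAntiOn_of_deriv_neg hconv hc ?_
    intro x hx
    rw [interior_Ico] at hx
    rw [(hBderiv x hx.2).deriv]
    have hgx : g x < 0 := div_neg_of_neg_of_pos (by linarith) (hpos x hx.2)
    exact mul_neg_of_pos_of_neg (Real.exp_pos _) hgx
  · -- upper bound A(s) ≤ (1-lam) * log (1-s) for s ∈ [0,1)
    have hbound : ∀ s : ℝ, 0 ≤ s → s < 1 →
        abelA lam s ≤ (1 - lam) * Real.log (1 - s) := by
      intro s hs0 hs1
      have hF : ∀ x ∈ Set.uIcc 0 s, HasDerivAt (fun y => (1 - lam) * Real.log (1 - y))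
          ((lam - 1) / (1 - x)) x := by
        intro x hx
        rw [Set.uIcc_of_le hs0] at hx
        have hx1 : x < 1 := lt_of_le_of_lt hx.2 hs1
        have h1 : HasDerivAt (fun y : ℝ => 1 - y) (-1) x := by
          simpa using (hasDerivAt_id x).const_sub 1
        have h2 : HasDerivAt (fun y => Real.log (1 - y)) (-1 / (1 - x)) x :=
          (h1.log (by linarith)).congr_deriv (by ring)
        have := h2.const_mul (1 - lam)
        refine this.congr_deriv ?_
        ring
      have hc1 : ContinuousOn (fun x : ℝ => (lam - 1) / (1 - x)) (Set.uIcc 0 s) := by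
        apply ContinuousOn.div continuousOn_const (continuous_const.sub continuous_id).continuousOn
        intro x hx
        rw [Set.uIcc_of_le hs0] at hx
        have : x < 1 := lt_of_le_of_lt hx.2 hs1
        intro h; simp only [Pi.sub_apply, id] at h; linarith [sub_eq_zero.mp h]
      have heq : (∫ x in (0:ℝ)..s, (lam - 1) / (1 - x))
          = (1 - lam) * Real.log (1 - s) := by
        rw [intervalIntegral.integral_eq_sub_of_hasDerivAt hF hc1.intervalIntegrable]
        simp
      rw [← heq, abelA]
      have hsub : Set.uIcc 0 s ⊆ Set.Iio 1 := by
        rw [Set.uIcc_of_le hs0]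
        intro x hx; exact lt_of_le_of_lt hx.2 hs1
      apply intervalIntegral.integral_mono_on hs0
        ((hcont.mono hsub).intervalIntegrable) hc1.intervalIntegrable
      intro x hx
      have hx1 : x < 1 := lt_of_le_of_lt hx.2 hs1
      have hd1 : (0:ℝ) < 1 - x := by linarith
      have hd2 : Real.exp (lam * (x - 1)) - x ≤ 1 - x := by
        have : Real.exp (lam * (x - 1)) ≤ 1 :=
          Real.exp_le_one_iff.mpr (by nlinarith)
        linarith
      rw [hg, div_le_div_iff₀ (hpos x hx1) hd1]
      nlinarith [hpos x hx1]
    -- squeeze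
    have hlog : Tendsto (fun s : ℝ => (1 - lam) * Real.log (1 - s))
        (nhdsWithin 1 (Set.Iio 1)) atBot := by
      have h1 : Tendsto (fun s : ℝ => 1 - s) (nhdsWithin 1 (Set.Iio 1))
          (nhdsWithin 0 (Set.Ioi 0)) := by
        apply tendsto_nhdsWithin_of_tendsto_nhds_of_eventually_within
        · have : Tendsto (fun s : ℝ => 1 - s) (nhds 1) (nhds 0) := by
            have := (continuous_const.sub continuous_id : Continuous fun s : ℝ => 1 - s).tendsto (1:ℝ)
            simpa using (show Tendsto (fun s : ℝ => 1 - s) (nhds 1) (nhds (1 - 1)) from this)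
          exact this.mono_left nhdsWithin_le_nhds
        · filter_upwards [self_mem_nhdsWithin] with x hx
          simp only [Set.mem_Iio] at hx
          simp [Set.mem_Ioi]; linarith
      have h2 := Real.tendsto_log_nhdsGT_zero.comp h1
      exact Tendsto.const_mul_atBot (by linarith) h2
    have hexp : Tendsto (fun s : ℝ => Real.exp ((1 - lam) * Real.log (1 - s)))
        (nhdsWithin 1 (Set.Iio 1)) (nhds 0) :=
      Real.tendsto_exp_atBot.comp hlog
    apply tendsto_of_tendsto_of_tendsto_of_le_of_le' tendsto_const_nhds hexp
    · filter_upwards with s using (hBpos s).le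
    · filter_upwards [Ioo_mem_nhdsLT_of_mem (by constructor <;> norm_num :
        (1:ℝ) ∈ Set.Ioc 0 1)] with s hs
      exact Real.exp_le_exp.mpr (hbound s hs.1.le hs.2)
end

section
/- Let 0 < λ < 1, A(s) = ∫_0^s (λ−1)/(e^{λ(x-1)} − x) dx and B(s) = exp(A(s)) for s ∈ [0,1). Then the limit lim_{s→1⁻} B(s)/(1−s) exists, is finite and strictly positive, and equals exp( ∫_0^1 [ (λ−1)/(e^{λ(x-1)} − x) + 1/(1−x) ] dx ), the integrand being continuous on [0,1] after continuous extension at x=1. -/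
open Filter

section aux
open Set
variable (lam : ℝ)

/-- `f(x) = e^{λ(x-1)} - x`, positive for `x < 1` when `λ < 1`. -/
lemma fpos (h1 : lam < 1) {x : ℝ} (hx : x < 1) (h0 : 0 ≤ lam) :
    x < Real.exp (lam * (x - 1)) := by
  have h := Real.add_one_le_exp (lam * (x - 1))
  nlinarith [h]

lemma hasDerivAt_g (x : ℝ) :
    HasDerivAt (fun x => Real.exp (lam * (x - 1)) - 1 - lam * (x - 1))
      (lam * Real.exp (lam * (x - 1)) - lam) x := by
  have hi : HasDerivAt (fun x : ℝ => lam * (x - 1)) lam x := by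
    simpa using ((hasDerivAt_id x).sub_const 1).const_mul lam
  have he := hi.exp
  have := (he.sub_const 1).sub hi
  exact this.congr_deriv (by ring)

lemma hasDerivAt_h (x : ℝ) :
    HasDerivAt (fun x => (Real.exp (lam * (x - 1)) - x) * (1 - x))
      ((lam * Real.exp (lam * (x - 1)) - 1) * (1 - x) - (Real.exp (lam * (x - 1)) - x)) x := by
  have hi : HasDerivAt (fun x : ℝ => lam * (x - 1)) lam x := by
    simpa using ((hasDerivAt_id x).sub_const 1).const_mul lam
  have he := hi.exp
  have hf : HasDerivAt (fun x => Real.exp (lam * (x - 1)) - x)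
      (lam * Real.exp (lam * (x - 1)) - 1) x := by
    have := he.sub (hasDerivAt_id x)
    exact this.congr_deriv (by ring)
  have ho : HasDerivAt (fun x : ℝ => 1 - x) (-1) x := by
    simpa using (hasDerivAt_id x).const_sub (1:ℝ)
  have := hf.mul ho
  exact this.congr_deriv (by ring)

lemma hasDerivAt_g' (x : ℝ) :
    HasDerivAt (fun x => lam * Real.exp (lam * (x - 1)) - lam)
      (lam * (lam * Real.exp (lam * (x - 1)))) x := by
  have hi : HasDerivAt (fun x : ℝ => lam * (x - 1)) lam x := by
    simpa using ((hasDerivAt_id x).sub_const 1).const_mul lam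
  have := (hi.exp.const_mul lam).sub_const lam
  exact this.congr_deriv (by ring)

lemma hasDerivAt_h' (x : ℝ) :
    HasDerivAt (fun x => (lam * Real.exp (lam * (x - 1)) - 1) * (1 - x)
        - (Real.exp (lam * (x - 1)) - x))
      (lam * lam * Real.exp (lam * (x - 1)) * (1 - x)
        - 2 * (lam * Real.exp (lam * (x - 1)) - 1)) x := by
  have hi : HasDerivAt (fun x : ℝ => lam * (x - 1)) lam x := by
    simpa using ((hasDerivAt_id x).sub_const 1).const_mul lam
  have he := hi.exp
  have h1 : HasDerivAt (fun x => lam * Real.exp (lam * (x - 1)) - 1)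
      (lam * (Real.exp (lam * (x - 1)) * lam)) x := (he.const_mul lam).sub_const 1
  have ho : HasDerivAt (fun x : ℝ => 1 - x) (-1) x := by
    simpa using (hasDerivAt_id x).const_sub (1:ℝ)
  have hf : HasDerivAt (fun x => Real.exp (lam * (x - 1)) - x)
      (lam * Real.exp (lam * (x - 1)) - 1) x := by
    have := he.sub (hasDerivAt_id x)
    exact this.congr_deriv (by ring)
  have := (h1.mul ho).sub hf
  exact this.congr_deriv (by ring)

/-- The key limit: `g/h → λ²/(2(1-λ))` as `x → 1⁻`. -/
lemma key_limit (h0 : 0 < lam) (h1 : lam < 1) :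
    Tendsto (fun x => (Real.exp (lam * (x - 1)) - 1 - lam * (x - 1)) /
        ((Real.exp (lam * (x - 1)) - x) * (1 - x))) (nhdsWithin 1 (Iio 1))
      (nhds (lam ^ 2 / (2 * (1 - lam)))) := by
  have hE : Continuous fun x : ℝ => Real.exp (lam * (x - 1)) :=
    (Real.continuous_exp.comp (by continuity))
  -- second-level quotient limit
  have hlim2 : Tendsto (fun x => (lam * (lam * Real.exp (lam * (x - 1)))) /
      (lam * lam * Real.exp (lam * (x - 1)) * (1 - x)
        - 2 * (lam * Real.exp (lam * (x - 1)) - 1))) (nhdsWithin 1 (Iio 1))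
      (nhds (lam ^ 2 / (2 * (1 - lam)))) := by
    have hc : Continuous fun x : ℝ => (lam * (lam * Real.exp (lam * (x - 1)))) := by
      continuity
    have hd : Continuous fun x : ℝ => lam * lam * Real.exp (lam * (x - 1)) * (1 - x)
        - 2 * (lam * Real.exp (lam * (x - 1)) - 1) := by continuity
    have hne : (lam * lam * Real.exp (lam * ((1:ℝ) - 1)) * (1 - 1)
        - 2 * (lam * Real.exp (lam * ((1:ℝ) - 1)) - 1)) ≠ 0 := by
      simp; nlinarith
    have := (hc.tendsto 1).div (hd.tendsto 1) hne
    have h2 : (lam * (lam * Real.exp (lam * ((1:ℝ) - 1)))) /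
        (lam * lam * Real.exp (lam * ((1:ℝ) - 1)) * (1 - 1)
          - 2 * (lam * Real.exp (lam * ((1:ℝ) - 1)) - 1)) = lam ^ 2 / (2 * (1 - lam)) := by
      norm_num; ring_nf
    rw [h2] at this
    exact this.mono_left nhdsWithin_le_nhds
  -- first L'Hôpital: g'/h' → limit
  have hlim1 : Tendsto (fun x => (lam * Real.exp (lam * (x - 1)) - lam) /
      ((lam * Real.exp (lam * (x - 1)) - 1) * (1 - x) - (Real.exp (lam * (x - 1)) - x)))
      (nhdsWithin 1 (Iio 1)) (nhds (lam ^ 2 / (2 * (1 - lam)))) := by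
    apply HasDerivAt.lhopital_zero_nhdsLT
      (f' := fun x => lam * (lam * Real.exp (lam * (x - 1))))
      (g' := fun x => lam * lam * Real.exp (lam * (x - 1)) * (1 - x)
        - 2 * (lam * Real.exp (lam * (x - 1)) - 1))
    · exact Eventually.of_forall (hasDerivAt_g' lam)
    · exact Eventually.of_forall (hasDerivAt_h' lam)
    · filter_upwards [self_mem_nhdsWithin] with x (hx : x < 1)
      have hEx : Real.exp (lam * (x - 1)) ≤ 1 := by
        rw [Real.exp_le_one_iff]
        nlinarith
      have hEp := Real.exp_pos (lam * (x - 1))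
      have t1 : 0 ≤ lam * lam * Real.exp (lam * (x - 1)) * (1 - x) :=
        mul_nonneg (by positivity) (by linarith)
      have t2 : lam * Real.exp (lam * (x - 1)) ≤ lam := by nlinarith
      have hpos : 0 < lam * lam * Real.exp (lam * (x - 1)) * (1 - x)
          - 2 * (lam * Real.exp (lam * (x - 1)) - 1) := by linarith
      exact hpos.ne'
    · have : Tendsto (fun x => lam * Real.exp (lam * (x - 1)) - lam) (nhds 1)
          (nhds (lam * Real.exp (lam * ((1:ℝ) - 1)) - lam)) := by
        exact Continuous.tendsto (by continuity) 1
      simp at this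
      exact this.mono_left nhdsWithin_le_nhds
    · have : Tendsto (fun x => (lam * Real.exp (lam * (x - 1)) - 1) * (1 - x)
          - (Real.exp (lam * (x - 1)) - x)) (nhds 1)
          (nhds ((lam * Real.exp (lam * ((1:ℝ) - 1)) - 1) * (1 - 1)
            - (Real.exp (lam * ((1:ℝ) - 1)) - 1))) := by
        exact Continuous.tendsto (by continuity) 1
      simp at this
      exact this.mono_left nhdsWithin_le_nhds
    · exact hlim2
  apply HasDerivAt.lhopital_zero_nhdsLT
    (f' := fun x => lam * Real.exp (lam * (x - 1)) - lam)
    (g' := fun x => (lam * Real.exp (lam * (x - 1)) - 1) * (1 - x)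
      - (Real.exp (lam * (x - 1)) - x))
  · exact Eventually.of_forall (hasDerivAt_g lam)
  · exact Eventually.of_forall (hasDerivAt_h lam)
  · filter_upwards [self_mem_nhdsWithin] with x (hx : x < 1)
    have hfx : x < Real.exp (lam * (x - 1)) := fpos lam h1 hx h0.le
    have hEx : Real.exp (lam * (x - 1)) ≤ 1 := by
      rw [Real.exp_le_one_iff]; nlinarith
    have h2 : lam * Real.exp (lam * (x - 1)) - 1 < 0 := by nlinarith
    have h3 : (lam * Real.exp (lam * (x - 1)) - 1) * (1 - x) < 0 :=
      mul_neg_of_neg_of_pos h2 (by linarith)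
    have hlt : (lam * Real.exp (lam * (x - 1)) - 1) * (1 - x)
        - (Real.exp (lam * (x - 1)) - x) < 0 := by linarith
    exact hlt.ne
  · have : Tendsto (fun x => Real.exp (lam * (x - 1)) - 1 - lam * (x - 1)) (nhds 1)
        (nhds (Real.exp (lam * ((1:ℝ) - 1)) - 1 - lam * (1 - 1))) :=
      Continuous.tendsto (by continuity) 1
    simp at this
    exact this.mono_left nhdsWithin_le_nhds
  · have : Tendsto (fun x => (Real.exp (lam * (x - 1)) - x) * (1 - x)) (nhds 1)
        (nhds ((Real.exp (lam * ((1:ℝ) - 1)) - 1) * (1 - 1))) :=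
      Continuous.tendsto (by continuity) 1
    simp at this
    exact this.mono_left nhdsWithin_le_nhds
  · exact hlim1

/-- The identity `B(s)/(1-s) = exp (∫_0^s [(λ-1)/f + 1/(1-x)])` for `s ∈ (0,1)`. -/
lemma koenigs_ident (h0 : 0 < lam) (h1 : lam < 1) {s : ℝ} (hs : s ∈ Ioo (0:ℝ) 1) :
    koenigsB lam s / (1 - s) = Real.exp (∫ x in (0:ℝ)..s,
      ((lam - 1) / (Real.exp (lam * (x - 1)) - x) + 1 / (1 - x))) := by
  obtain ⟨hs0, hs1⟩ := hs
  have hIcc : uIcc (0:ℝ) s = Icc 0 s := uIcc_of_le hs0.le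
  have hlt : ∀ x ∈ Icc (0:ℝ) s, x < 1 := fun x hx => lt_of_le_of_lt hx.2 hs1
  have hcont1 : ContinuousOn (fun x => (lam - 1) / (Real.exp (lam * (x - 1)) - x))
      (uIcc (0:ℝ) s) := by
    rw [hIcc]
    apply continuousOn_const.div (Continuous.continuousOn (by continuity))
    intro x hx
    exact sub_ne_zero.mpr (fpos lam h1 (hlt x hx) h0.le).ne'
  have hcont2 : ContinuousOn (fun x : ℝ => 1 / (1 - x)) (uIcc (0:ℝ) s) := by
    rw [hIcc]
    apply continuousOn_const.div (Continuous.continuousOn (by continuity))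
    intro x hx
    have := hlt x hx; intro h; linarith [sub_eq_zero.mp h]
  have hi1 : IntervalIntegrable (fun x => (lam - 1) / (Real.exp (lam * (x - 1)) - x))
      MeasureTheory.volume 0 s := hcont1.intervalIntegrable
  have hi2 : IntervalIntegrable (fun x : ℝ => 1 / (1 - x)) MeasureTheory.volume 0 s :=
      hcont2.intervalIntegrable
  have hlog : (∫ x in (0:ℝ)..s, 1 / (1 - x)) = -Real.log (1 - s) := by
    have key : (∫ x in (0:ℝ)..s, 1 / (1 - x))
        = (-Real.log (1 - s)) - (-Real.log (1 - 0)) := by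
      apply intervalIntegral.integral_eq_sub_of_hasDerivAt
      · intro x hx
        rw [hIcc] at hx
        have hxlt := hlt x hx
        have hne : (1:ℝ) - x ≠ 0 := by intro h; linarith [sub_eq_zero.mp h]
        have hinner : HasDerivAt (fun x : ℝ => 1 - x) (-1) x := by
          simpa using (hasDerivAt_id x).const_sub (1:ℝ)
        have hlog := ((Real.hasDerivAt_log hne).comp x hinner).neg
        exact hlog.congr_deriv (by rw [one_div]; ring)
      · exact hi2
    simpa using key
  have hadd : (∫ x in (0:ℝ)..s,
        ((lam - 1) / (Real.exp (lam * (x - 1)) - x) + 1 / (1 - x)))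
      = abelA lam s + ∫ x in (0:ℝ)..s, 1 / (1 - x) :=
    intervalIntegral.integral_add hi1 hi2
  have h1s : (0:ℝ) < 1 - s := by linarith
  rw [hadd, hlog, Real.exp_add, Real.exp_neg, Real.exp_log h1s, koenigsB, div_eq_mul_inv]

end aux


section
open Set

/-- For `0 < λ < 1`, the limit `lim_{s→1⁻} B(s)/(1-s)` exists, is finite and
strictly positive, and equals `exp (∫_0^1 [(λ-1)/(e^{λ(x-1)} - x) + 1/(1-x)] dx)`,
the integrand being continuous on `[0,1]` after continuous extension at `x = 1`. -/
theorem koenigsB_div_one_sub_limit (lam : ℝ) (h0 : 0 < lam) (h1 : lam < 1) :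
    ∃ F : ℝ → ℝ, ContinuousOn F (Set.Icc 0 1) ∧
      (∀ x ∈ Set.Ico (0:ℝ) 1,
        F x = (lam - 1) / (Real.exp (lam * (x - 1)) - x) + 1 / (1 - x)) ∧
      ∃ L : ℝ, 0 < L ∧ L = Real.exp (∫ x in (0:ℝ)..1, F x) ∧
        Tendsto (fun s => koenigsB lam s / (1 - s)) (nhdsWithin 1 (Set.Iio 1)) (nhds L) := by
  set q : ℝ → ℝ := fun x => (lam - 1) / (Real.exp (lam * (x - 1)) - x) + 1 / (1 - x) with hq
  set c : ℝ := lam ^ 2 / (2 * (1 - lam)) with hc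
  set F : ℝ → ℝ := fun x => if x < 1 then q x else c with hF
  have hq_gh : ∀ x < (1:ℝ), q x = (Real.exp (lam * (x - 1)) - 1 - lam * (x - 1)) /
      ((Real.exp (lam * (x - 1)) - x) * (1 - x)) := by
    intro x hx
    have hfx := fpos lam h1 hx h0.le
    have hne : Real.exp (lam * (x - 1)) - x ≠ 0 := sub_ne_zero.mpr hfx.ne'
    have hne2 : (1:ℝ) - x ≠ 0 := by intro h; linarith [sub_eq_zero.mp h]
    simp only [hq]
    field_simp
    ring
  have htq : Tendsto q (nhdsWithin 1 (Iio 1)) (nhds c) := by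
    refine (key_limit lam h0 h1).congr' ?_
    filter_upwards [self_mem_nhdsWithin] with x (hx : x < 1)
    exact (hq_gh x hx).symm
  have hFcont : ContinuousOn F (Icc (0:ℝ) 1) := by
    intro x hx
    rcases lt_or_eq_of_le hx.2 with hlt | heq
    · have hqc : ContinuousAt q x := by
        have hfx := fpos lam h1 hlt h0.le
        have hne : Real.exp (lam * (x - 1)) - x ≠ 0 := sub_ne_zero.mpr hfx.ne'
        have hne2 : (1:ℝ) - x ≠ 0 := by intro h; linarith [sub_eq_zero.mp h]
        apply ContinuousAt.add
        · exact ContinuousAt.div continuousAt_const (Continuous.continuousAt (by continuity)) hne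
        · exact ContinuousAt.div continuousAt_const (Continuous.continuousAt (by continuity)) hne2
      have hev : F =ᶠ[nhds x] q := by
        filter_upwards [eventually_lt_nhds hlt] with y hy
        simp [hF, hy]
      have : ContinuousAt F x := hqc.congr hev.symm
      exact this.continuousWithinAt
    · subst heq
      have hF1 : F 1 = c := by simp [hF]
      rw [ContinuousWithinAt, hF1]
      have hsplit : Icc (0:ℝ) 1 = Ico 0 1 ∪ {1} := by
        ext y
        simp only [Set.mem_Icc, Set.mem_union, Set.mem_Ico, Set.mem_singleton_iff]
        constructor
        · rintro ⟨hy0, hy1⟩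
          rcases lt_or_eq_of_le hy1 with h | h
          · exact Or.inl ⟨hy0, h⟩
          · exact Or.inr h
        · rintro (⟨hy0, hy1⟩ | h)
          · exact ⟨hy0, hy1.le⟩
          · exact ⟨by rw [h]; norm_num, by rw [h]⟩
      rw [hsplit, nhdsWithin_union, tendsto_sup]
      constructor
      · have hmono : nhdsWithin (1:ℝ) (Ico 0 1) ≤ nhdsWithin 1 (Iio 1) :=
          nhdsWithin_mono _ Ico_subset_Iio_self
        refine Tendsto.congr' ?_ (htq.mono_left hmono)
        filter_upwards [self_mem_nhdsWithin] with y hy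
        simp [hF, hy.2]
      · rw [nhdsWithin_singleton, tendsto_pure_left]
        intro U hU
        have : F 1 = c := by simp [hF]
        rw [this]
        exact mem_of_mem_nhds hU
  refine ⟨F, hFcont, ?_, ?_⟩
  · intro x hx
    show (if x < 1 then q x else c) = _
    rw [if_pos hx.2]
  · have hFint : MeasureTheory.IntegrableOn F (uIcc (0:ℝ) 1) := by
      rw [uIcc_of_le zero_le_one]
      exact hFcont.integrableOn_Icc
    have hprim := intervalIntegral.continuousOn_primitive_interval (a := 0) (b := 1) hFint
    refine ⟨Real.exp (∫ x in (0:ℝ)..1, F x), Real.exp_pos _, rfl, ?_⟩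
    have hsub : nhdsWithin (1:ℝ) (Iio 1) ≤ nhdsWithin 1 (uIcc (0:ℝ) 1) := by
      rw [uIcc_of_le zero_le_one, ← nhdsWithin_Ico_eq_nhdsLT (zero_lt_one (α := ℝ))]
      exact nhdsWithin_mono _ Ico_subset_Icc_self
    have htend : Tendsto (fun s => ∫ x in (0:ℝ)..s, F x) (nhdsWithin 1 (Iio 1))
        (nhds (∫ x in (0:ℝ)..1, F x)) :=
      (hprim 1 (by rw [uIcc_of_le zero_le_one]; exact right_mem_Icc.mpr zero_le_one)).mono_left
        hsub
    have hexp := (Real.continuous_exp.tendsto _).comp htend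
    refine Tendsto.congr' ?_ hexp
    have h0s : ∀ᶠ s in nhdsWithin (1:ℝ) (Iio 1), (0:ℝ) < s :=
      eventually_nhdsWithin_of_eventually_nhds (eventually_gt_nhds zero_lt_one)
    filter_upwards [self_mem_nhdsWithin, h0s] with s (hs1 : s < 1) hs0
    have hFq : (∫ x in (0:ℝ)..s, F x) = ∫ x in (0:ℝ)..s, q x := by
      apply intervalIntegral.integral_congr
      intro x hx
      rw [uIcc_of_le hs0.le] at hx
      have : x < 1 := lt_of_le_of_lt hx.2 hs1
      simp [hF, this]
    have hid := koenigs_ident lam h0 h1 (s := s) ⟨hs0, hs1⟩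
    show Real.exp (∫ x in (0:ℝ)..s, F x) = koenigsB lam s / (1 - s)
    rw [hFq]
    exact hid.symm


end
end

section
/- For every real x: e^{x} · ∑_{k=1}^{∞} (−1)^{k+1} x^{k}/(k·k!) = ∑_{n=1}^{∞} H_{n} · x^{n}/n!, where H_{n} = 1 + 1/2 + ⋯ + 1/n is the n-th harmonic number; equivalently, Ein(x) = e^{−x} ∑_{n=1}^{∞} H_{n} x^{n}/n!. -/
open Finset

/-- `∑_{j=0}^m (-1)^j C(m,j)/(j+1) = 1/(m+1)`. -/
lemma aux_alt (m : ℕ) :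
    ∑ j ∈ range (m + 1), (-1 : ℝ) ^ j * (m.choose j) / (j + 1) = 1 / (m + 1) := by
  have h1 : ∀ j ∈ range (m + 1),
      (-1 : ℝ) ^ j * (m.choose j) / (j + 1)
        = (-1 : ℝ) ^ j * ((m + 1).choose (j + 1)) / (m + 1) := by
    intro j hj
    have := Nat.add_one_mul_choose_eq m j
    have hcast : ((m : ℝ) + 1) * (m.choose j) = ((m + 1).choose (j + 1)) * ((j : ℝ) + 1) := by
      exact_mod_cast congrArg (Nat.cast : ℕ → ℝ) this
    have hj1 : ((j : ℝ) + 1) ≠ 0 := by positivity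
    have hm1 : ((m : ℝ) + 1) ≠ 0 := by positivity
    have hd : ((m.choose j : ℝ)) / (j + 1) = ((m + 1).choose (j + 1) : ℝ) / (m + 1) := by
      rw [div_eq_div_iff hj1 hm1, mul_comm]
      exact hcast
    rw [mul_div_assoc, mul_div_assoc, hd]
  rw [sum_congr rfl h1]
  rw [← sum_div]
  congr 1
  -- ∑_{j=0}^m (-1)^j C(m+1, j+1) = 1
  have h0 : ∑ i ∈ range (m + 2), (-1 : ℤ) ^ i * ((m + 1).choose i) = 0 :=
    Int.alternating_sum_range_choose_of_ne (Nat.succ_ne_zero m)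
  have h2 : ∑ i ∈ range (m + 2), (-1 : ℝ) ^ i * ((m + 1).choose i) = 0 := by
    exact_mod_cast congrArg (Int.cast : ℤ → ℝ) h0
  rw [Finset.sum_range_succ'] at h2
  simp only [pow_succ, Nat.choose_zero_right] at h2 ⊢
  have : ∑ j ∈ range (m + 1), (-1 : ℝ) ^ j * (-1) * ((m + 1).choose (j + 1)) + 1 = 0 := by
    simpa using h2
  calc ∑ j ∈ range (m + 1), (-1 : ℝ) ^ j * ((m + 1).choose (j + 1))
      = -∑ j ∈ range (m + 1), (-1 : ℝ) ^ j * (-1) * ((m + 1).choose (j + 1)) := by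
        rw [← Finset.sum_neg_distrib]; apply sum_congr rfl; intros; ring
    _ = 1 := by linarith

lemma key (n : ℕ) :
    ∑ j ∈ range (n + 1), (-1 : ℝ) ^ j * ((n + 1).choose (j + 1)) / (j + 1)
      = (harmonic (n + 1) : ℝ) := by
  induction n with
  | zero => simp [harmonic_succ]
  | succ n ih =>
    have pascal : ∀ j, ((n + 2).choose (j + 1) : ℝ)
        = ((n + 1).choose j : ℝ) + ((n + 1).choose (j + 1) : ℝ) := by
      intro j
      exact_mod_cast congrArg (Nat.cast : ℕ → ℝ) (Nat.choose_succ_succ (n + 1) j)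
    have hsplit : ∑ j ∈ range (n + 2), (-1 : ℝ) ^ j * ((n + 2).choose (j + 1)) / (j + 1)
        = (∑ j ∈ range (n + 2), (-1 : ℝ) ^ j * ((n + 1).choose (j + 1)) / (j + 1))
          + ∑ j ∈ range (n + 2), (-1 : ℝ) ^ j * ((n + 1).choose j) / (j + 1) := by
      rw [← Finset.sum_add_distrib]
      apply sum_congr rfl; intro j hj
      rw [pascal]; ring
    have hlast : ∑ j ∈ range (n + 2), (-1 : ℝ) ^ j * ((n + 1).choose (j + 1)) / (j + 1)
        = ∑ j ∈ range (n + 1), (-1 : ℝ) ^ j * ((n + 1).choose (j + 1)) / (j + 1) := by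
      rw [Finset.sum_range_succ]
      simp [Nat.choose_eq_zero_of_lt (by omega : n + 1 < n + 2)]
    rw [hsplit, hlast, ih, aux_alt (n + 1), harmonic_succ (n + 1)]
    push_cast
    ring

/-- `Ein(x) = e^{-x} ∑_{n=1}^∞ H_n x^n/n!`, equivalently
`e^x ∑_{k=1}^∞ (-1)^{k+1} x^k/(k·k!) = ∑_{n=1}^∞ H_n x^n/n!`, where `H_n` is the
`n`-th harmonic number and `Ein` the modified exponential integral. -/
theorem exp_mul_Ein_eq_harmonic_series (x : ℝ) :
    HasSum
      (fun n : ℕ => (harmonic (n + 1) : ℝ) * x ^ (n + 1) / ((n + 1).factorial : ℝ))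
      (Real.exp x *
        ∑' k : ℕ, (-1 : ℝ) ^ k * x ^ (k + 1) / (((k : ℝ) + 1) * ((k + 1).factorial : ℝ))) := by
  set f : ℕ → ℝ := fun m => x ^ m / m.factorial with hf_def
  set g : ℕ → ℝ := fun k => (-1 : ℝ) ^ k * x ^ (k + 1) / (((k : ℝ) + 1) * ((k + 1).factorial : ℝ))
    with hg_def
  have hf : Summable fun m => ‖f m‖ := by
    have := Real.summable_pow_div_factorial |x|
    refine this.congr fun m => ?_
    simp [hf_def, abs_div, abs_pow, Nat.abs_cast, Real.norm_eq_abs]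
  have hgle : ∀ k, ‖g k‖ ≤ |x| ^ (k + 1) / ((k + 1).factorial : ℝ) := by
    intro k
    have h1 : (1 : ℝ) ≤ (k : ℝ) + 1 := by
      have := Nat.cast_nonneg (α := ℝ) k; linarith
    have hfp : (0 : ℝ) < ((k + 1).factorial : ℝ) := by
      exact_mod_cast Nat.factorial_pos (k + 1)
    simp only [hg_def, Real.norm_eq_abs, abs_div, abs_mul, abs_pow, abs_neg, abs_one, one_pow,
      one_mul]
    rw [abs_of_nonneg (by positivity : (0:ℝ) ≤ (k:ℝ) + 1), Nat.abs_cast]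
    apply div_le_div_of_nonneg_left (by positivity) hfp
    nlinarith
  have hg : Summable fun k => ‖g k‖ := by
    have hs : Summable fun k : ℕ => |x| ^ (k + 1) / ((k + 1).factorial : ℝ) :=
      (summable_nat_add_iff 1).mpr (Real.summable_pow_div_factorial |x|)
    exact Summable.of_nonneg_of_le (fun k => norm_nonneg _) hgle hs
  have hexp : (∑' m, f m) = Real.exp x := by
    rw [Real.exp_eq_exp_ℝ]
    exact (NormedSpace.expSeries_div_hasSum_exp x).tsum_eq
  have hcauchy := hasSum_sum_range_mul_of_summable_norm hf hg
  rw [hexp] at hcauchy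
  have heq : ∀ n : ℕ, ∑ k ∈ Finset.range (n + 1), f k * g (n - k)
      = (harmonic (n + 1) : ℝ) * x ^ (n + 1) / ((n + 1).factorial : ℝ) := by
    intro n
    have hterm : ∀ k ∈ Finset.range (n + 1),
        f k * g (n - k)
          = ((-1 : ℝ) ^ (n - k) * ((n + 1).choose ((n - k) + 1)) / (((n - k : ℕ) : ℝ) + 1))
            * (x ^ (n + 1) / ((n + 1).factorial : ℝ)) := by
      intro k hk
      have hkn : k ≤ n := by simpa [Nat.lt_succ_iff] using hk
      set j := n - k with hj
      have hjk : j + k = n := by omega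
      have hC : ((n + 1).choose (j + 1) : ℝ) * ((j + 1).factorial : ℝ) * (k.factorial : ℝ)
          = ((n + 1).factorial : ℝ) := by
        have h := Nat.choose_mul_factorial_mul_factorial (by omega : j + 1 ≤ n + 1)
        have h2 : n + 1 - (j + 1) = k := by omega
        rw [h2] at h
        exact_mod_cast congrArg (Nat.cast : ℕ → ℝ) h
      have hx : x ^ k * x ^ (j + 1) = x ^ (n + 1) := by
        rw [← pow_add]; congr 1; omega
      simp only [hf_def, hg_def]
      have hkf : (0 : ℝ) < (k.factorial : ℝ) := by exact_mod_cast Nat.factorial_pos k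
      have hjf : (0 : ℝ) < ((j + 1).factorial : ℝ) := by exact_mod_cast Nat.factorial_pos (j + 1)
      have hnf : (0 : ℝ) < ((n + 1).factorial : ℝ) := by exact_mod_cast Nat.factorial_pos (n + 1)
      have hj1 : (0 : ℝ) < (j : ℝ) + 1 := by positivity
      field_simp
      linear_combination ((n + 1).factorial : ℝ) * hx - x ^ (n + 1) * hC
    rw [Finset.sum_congr rfl hterm, ← Finset.sum_mul]
    have hreflect : ∑ k ∈ Finset.range (n + 1),
        (-1 : ℝ) ^ (n - k) * ((n + 1).choose ((n - k) + 1)) / (((n - k : ℕ) : ℝ) + 1)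
          = ∑ j ∈ Finset.range (n + 1),
            (-1 : ℝ) ^ j * ((n + 1).choose (j + 1)) / ((j : ℝ) + 1) := by
      have := Finset.sum_range_reflect
        (fun j => (-1 : ℝ) ^ j * ((n + 1).choose (j + 1)) / ((j : ℝ) + 1)) (n + 1)
      simpa using this
    rw [hreflect, key n, mul_div_assoc]
  have hfun : (fun n : ℕ => (harmonic (n + 1) : ℝ) * x ^ (n + 1) / ((n + 1).factorial : ℝ))
      = fun n : ℕ => ∑ k ∈ Finset.range (n + 1), f k * g (n - k) :=
    funext fun n => (heq n).symm
  rw [hfun]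
  exact hcauchy
end
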